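/- Let β > 0 and p > 0 and define h(u) = 1/(1 + exp(−β((1+u)^{−p} − 1))). Then h is twice differentiable on [0, ∞) and h''(u) > 0 for every u ≥ 0; in particular h is strictly convex on [0, ∞). Moreover h''(u) ≥ (exp(−β((1+u)^{−p}−1)) / (1 + exp(−β((1+u)^{−p}−1)))²) · β p (p+1) / (1+u)^{p+2} for every u ≥ 0. -/

import Mathlib

open Real

/-- The switch function `h(u) = 1/(1 + exp(−β((1+u)^{−p} − 1)))`. -/
noncomputable def hfun (β p u : ℝ) : ℝ :=
  1 / (1 + Real.exp (-(β * ((1 + u) ^ (-p) - 1))))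

noncomputable def Efun (β p u : ℝ) : ℝ := Real.exp (-(β * ((1 + u) ^ (-p) - 1)))

noncomputable def hf1 (β p u : ℝ) : ℝ :=
  -(β * p * (1 + u) ^ (-p - 1) * Efun β p u) / (1 + Efun β p u) ^ 2

noncomputable def hf2 (β p u : ℝ) : ℝ :=
  β * p * (p + 1) * (1 + u) ^ (-p - 2) * Efun β p u / (1 + Efun β p u) ^ 2 +
    (β * p * (1 + u) ^ (-p - 1)) ^ 2 * Efun β p u * (Efun β p u - 1) / (1 + Efun β p u) ^ 3

lemma Efun_pos (β p u : ℝ) : 0 < Efun β p u := Real.exp_pos _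

lemma one_add_Efun_ne (β p u : ℝ) : (1 : ℝ) + Efun β p u ≠ 0 := by
  have := Efun_pos β p u; intro h; linarith

lemma hasDerivAt_Efun (β p : ℝ) {u : ℝ} (hu : -1 < u) :
    HasDerivAt (Efun β p) (Efun β p u * (β * p * (1 + u) ^ (-p - 1))) u := by
  have ha : (0 : ℝ) < 1 + u := by linarith
  have L1 : HasDerivAt (fun v : ℝ => (1 + v) ^ (-p)) (-p * (1 + u) ^ (-p - 1)) u := by
    have hx := (Real.hasDerivAt_rpow_const (x := 1 + u) (p := -p)
      (Or.inl (ne_of_gt ha))).comp u ((hasDerivAt_id u).const_add 1)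
    simpa [Function.comp_def] using hx
  have := (((L1.sub_const 1).const_mul β).neg).exp
  show HasDerivAt (fun v => Efun β p v) _ u
  simpa [Efun, mul_comm, mul_assoc, mul_left_comm] using this

lemma hasDerivAt_hfun (β p : ℝ) {u : ℝ} (hu : -1 < u) :
    HasDerivAt (hfun β p) (hf1 β p u) u := by
  have hE := hasDerivAt_Efun β p hu
  have hD := (hE.const_add 1)
  have h := (hasDerivAt_const u (1 : ℝ)).div hD (one_add_Efun_ne β p u)
  have : hfun β p = fun v => 1 / (1 + Efun β p v) := by
    funext v; simp [hfun, Efun]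
  rw [this]
  refine h.congr_deriv ?_
  unfold hf1
  ring

lemma hasDerivAt_hf1 (β p : ℝ) {u : ℝ} (hu : -1 < u) :
    HasDerivAt (hf1 β p) (hf2 β p u) u := by
  have ha : (0 : ℝ) < 1 + u := by linarith
  have hE := hasDerivAt_Efun β p hu
  -- derivative of (1+v)^(-p-1)
  have Lx : HasDerivAt (fun v : ℝ => (1 + v) ^ (-p - 1)) ((-p - 1) * (1 + u) ^ (-p - 2)) u := by
    have hx := (Real.hasDerivAt_rpow_const (x := 1 + u) (p := -p - 1)
      (Or.inl (ne_of_gt ha))).comp u ((hasDerivAt_id u).const_add 1)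
    have : (-p - 1) - 1 = -p - 2 := by ring
    simpa [this, Function.comp_def] using hx
  -- numerator
  have hN : HasDerivAt (fun v => -(β * p * (1 + v) ^ (-p - 1) * Efun β p v))
      (-(β * p * ((-p - 1) * (1 + u) ^ (-p - 2) * Efun β p u +
        (1 + u) ^ (-p - 1) * (Efun β p u * (β * p * (1 + u) ^ (-p - 1)))))) u := by
    have := ((Lx.mul hE).const_mul (β * p)).neg
    exact this.congr_of_eventuallyEq (Filter.Eventually.of_forall (fun v => by simp [mul_assoc]))
  -- denominator
  have hD : HasDerivAt (fun v => (1 + Efun β p v) ^ 2)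
      ((2 : ℕ) * (1 + Efun β p u) ^ 1 * (Efun β p u * (β * p * (1 + u) ^ (-p - 1)))) u := by
    exact (hE.const_add 1).pow 2
  have h := hN.div hD (pow_ne_zero 2 (one_add_Efun_ne β p u))
  have heq : hf1 β p = fun v => -(β * p * (1 + v) ^ (-p - 1) * Efun β p v) / (1 + Efun β p v) ^ 2 := rfl
  rw [heq]
  refine h.congr_deriv ?_
  unfold hf2
  have hne := one_add_Efun_ne β p u
  field_simp
  ring

lemma deriv_hfun_eq (β p : ℝ) {u : ℝ} (hu : -1 < u) :
    deriv (hfun β p) u = hf1 β p u := (hasDerivAt_hfun β p hu).deriv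

lemma deriv_hfun_eventually (β p : ℝ) {u : ℝ} (hu : -1 < u) :
    deriv (hfun β p) =ᶠ[nhds u] hf1 β p := by
  filter_upwards [Ioi_mem_nhds hu] with v hv
  exact deriv_hfun_eq β p hv

lemma deriv2_hfun_eq (β p : ℝ) {u : ℝ} (hu : -1 < u) :
    deriv (deriv (hfun β p)) u = hf2 β p u := by
  rw [(deriv_hfun_eventually β p hu).deriv_eq]
  exact (hasDerivAt_hf1 β p hu).deriv

lemma hf2_bound (β p : ℝ) (hβ : 0 < β) (hp : 0 < p) {u : ℝ} (hu : 0 ≤ u) :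
    (Real.exp (-(β * ((1 + u) ^ (-p) - 1))) /
        (1 + Real.exp (-(β * ((1 + u) ^ (-p) - 1)))) ^ 2) *
        (β * p * (p + 1) / (1 + u) ^ (p + 2)) ≤ hf2 β p u := by
  have ha : (0 : ℝ) < 1 + u := by linarith
  have hE1 : (1 : ℝ) ≤ Efun β p u := by
    rw [Efun]
    apply Real.one_le_exp
    have h1 : (1 + u) ^ (-p) ≤ 1 :=
      Real.rpow_le_one_of_one_le_of_nonpos (by linarith) (by linarith)
    nlinarith
  have hterm2 : 0 ≤ (β * p * (1 + u) ^ (-p - 1)) ^ 2 * Efun β p u * (Efun β p u - 1) /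
      (1 + Efun β p u) ^ 3 := by
    have h1 : (0 : ℝ) < Efun β p u := Efun_pos β p u
    apply div_nonneg _ (by positivity)
    exact mul_nonneg (mul_nonneg (sq_nonneg _) h1.le) (by linarith)
  have hEeq : Real.exp (-(β * ((1 + u) ^ (-p) - 1))) = Efun β p u := rfl
  have hrw : (1 + u) ^ (-p - 2) = ((1 + u) ^ (p + 2))⁻¹ := by
    rw [show (-p - 2) = -(p + 2) by ring, Real.rpow_neg ha.le]
  rw [hf2, hEeq, hrw]
  have hle : Efun β p u / (1 + Efun β p u) ^ 2 * (β * p * (p + 1) / (1 + u) ^ (p + 2)) =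
      β * p * (p + 1) * ((1 + u) ^ (p + 2))⁻¹ * Efun β p u / (1 + Efun β p u) ^ 2 := by
    ring
  rw [hle]
  linarith [hterm2]

lemma hf2_pos (β p : ℝ) (hβ : 0 < β) (hp : 0 < p) {u : ℝ} (hu : 0 ≤ u) :
    0 < hf2 β p u := by
  have ha : (0 : ℝ) < 1 + u := by linarith
  have h := hf2_bound β p hβ hp hu
  have hl : 0 < (Real.exp (-(β * ((1 + u) ^ (-p) - 1))) /
      (1 + Real.exp (-(β * ((1 + u) ^ (-p) - 1)))) ^ 2) *
      (β * p * (p + 1) / (1 + u) ^ (p + 2)) := by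
    have e1 := Real.exp_pos (-(β * ((1 + u) ^ (-p) - 1)))
    have e2 := Real.rpow_pos_of_pos ha (p + 2)
    apply mul_pos (div_pos e1 (by positivity))
    exact div_pos (by positivity) e2
  linarith

/-- `h` is twice differentiable on `[0,∞)` with `h'' > 0`, hence strictly
convex there, together with the explicit lower bound on `h''`. -/
theorem hfun_second_deriv_pos_strictConvex (β p : ℝ) (hβ : 0 < β) (hp : 0 < p) :
    (∀ u : ℝ, 0 ≤ u → DifferentiableAt ℝ (hfun β p) u ∧
      DifferentiableAt ℝ (deriv (hfun β p)) u ∧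
      0 < deriv (deriv (hfun β p)) u ∧
      (Real.exp (-(β * ((1 + u) ^ (-p) - 1))) /
          (1 + Real.exp (-(β * ((1 + u) ^ (-p) - 1)))) ^ 2) *
          (β * p * (p + 1) / (1 + u) ^ (p + 2)) ≤ deriv (deriv (hfun β p)) u) ∧
    StrictConvexOn ℝ (Set.Ici (0 : ℝ)) (hfun β p) := by
  constructor
  · intro u hu
    have hu1 : (-1 : ℝ) < u := by linarith
    refine ⟨(hasDerivAt_hfun β p hu1).differentiableAt, ?_, ?_, ?_⟩
    · exact (hasDerivAt_hf1 β p hu1).differentiableAt.congr_of_eventuallyEq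
        (deriv_hfun_eventually β p hu1)
    · rw [deriv2_hfun_eq β p hu1]; exact hf2_pos β p hβ hp hu
    · rw [deriv2_hfun_eq β p hu1]; exact hf2_bound β p hβ hp hu
  · apply strictConvexOn_of_deriv2_pos (convex_Ici 0)
    · intro u hu
      have hu1 : (-1 : ℝ) < u := by
        simp only [Set.mem_Ici] at hu; linarith
      exact (hasDerivAt_hfun β p hu1).differentiableAt.continuousAt.continuousWithinAt
    · intro u hu
      rw [interior_Ici] at hu
      have hu0 : (0 : ℝ) ≤ u := le_of_lt hu
      have hu1 : (-1 : ℝ) < u := by linarith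
      show 0 < deriv (deriv (hfun β p)) u
      rw [deriv2_hfun_eq β p hu1]
      exact hf2_pos β p hβ hp hu0
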